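/- Let (Ω, 𝓕, P) be a standard Borel probability space, let B = (B₀, B₁) : Ω → ℝ², W : Ω → ℝ and X : Ω → ℝ^d be measurable, and suppose B and W are conditionally independent given the σ-algebra σ(X). Set Y = B₀ + B₁·W and assume B₀, B₁ and B₁·W are integrable. Then P-almost surely, E[Y | σ(X) ⊔ σ(W)] = E[B₀ | σ(X)] + E[B₁ | σ(X)] · W. -/

import Mathlib

open MeasureTheory ProbabilityTheory Filter
open scoped Topology

section Aux

variable {Ω : Type*} {m' : MeasurableSpace Ω} [mΩ : MeasurableSpace Ω] [StandardBorelSpace Ω]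
  [Nonempty Ω] {μ : Measure Ω} [IsProbabilityMeasure μ]

private lemma integrable_of_bdd {h : Ω → ℝ} (hm : AEStronglyMeasurable h μ) {C : ℝ}
    (hb : ∀ᵐ x ∂μ, ‖h x‖ ≤ C) : Integrable h μ :=
  (memLp_top_of_bound hm C hb).integrable le_top

/-- crux: integrals agree on rectangles -/
private lemma crux
    (hm' : m' ≤ mΩ)
    {f W : Ω → ℝ} (hf : Measurable f) (hW : Measurable W)
    (hCI : CondIndepFun m' hm' f W μ) (hfi : Integrable f μ)
    {A : Set Ω} (hA : MeasurableSet[m'] A) {C : Set ℝ} (hC : MeasurableSet C) :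
    ∫ x in A ∩ W ⁻¹' C, (μ[f|m']) x ∂μ = ∫ x in A ∩ W ⁻¹' C, f x ∂μ := by
  set t : Set Ω := W ⁻¹' C with ht_def
  have htm : MeasurableSet t := hW hC
  have hAm : MeasurableSet A := hm' _ hA
  set a : Ω → ℝ := A.indicator (fun _ => (1:ℝ)) with ha_def
  set e : Ω → ℝ := t.indicator (fun _ => (1:ℝ)) with he_def
  set g : Ω → ℝ := μ[e|m'] with hg_def
  have ha_sm : StronglyMeasurable[m'] a := stronglyMeasurable_const.indicator hA
  have ha_bd : ∀ x, ‖a x‖ ≤ 1 := by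
    intro x; by_cases hx : x ∈ A <;> simp [ha_def, Set.indicator_apply, hx]
  have he_bd : ∀ x, ‖e x‖ ≤ 1 := by
    intro x; by_cases hx : x ∈ t <;> simp [he_def, Set.indicator_apply, hx]
  have hei : Integrable e μ := (integrable_const (1:ℝ)).indicator htm
  have hg_sm : StronglyMeasurable[m'] g := stronglyMeasurable_condExp
  have hg_bd : ∀ᵐ x ∂μ, ‖g x‖ ≤ 1 := by
    have h0 : 0 ≤ᵐ[μ] g := condExp_nonneg (by
      refine Eventually.of_forall fun x => ?_
      by_cases hx : x ∈ t <;> simp [he_def, Set.indicator_apply, hx])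
    have h1 : g ≤ᵐ[μ] μ[(fun _ => (1:ℝ))|m'] := by
      refine condExp_mono hei (integrable_const 1) ?_
      refine Eventually.of_forall fun x => ?_
      by_cases hx : x ∈ t <;> simp [he_def, Set.indicator_apply, hx]
    have hc : μ[(fun _ => (1:ℝ))|m'] = fun _ => (1:ℝ) := condExp_const hm' (1:ℝ)
    filter_upwards [h0, h1] with x hx0 hx1
    simp only [Pi.zero_apply] at hx0
    rw [hc] at hx1
    rw [Real.norm_eq_abs, abs_le]
    exact ⟨by linarith, hx1⟩
  -- the set-function k = a * g
  set k : Ω → ℝ := fun x => a x * g x with hk_def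
  have hk_sm : StronglyMeasurable[m'] k := ha_sm.mul hg_sm
  have hk_bd : ∀ᵐ x ∂μ, ‖k x‖ ≤ 1 := by
    filter_upwards [hg_bd] with x hx
    calc ‖a x * g x‖ = ‖a x‖ * ‖g x‖ := norm_mul _ _
      _ ≤ 1 * 1 := mul_le_mul (ha_bd x) hx (norm_nonneg _) zero_le_one
      _ = 1 := one_mul 1
  -- indicator case of the product identity
  have hQ_ind : ∀ s : Set Ω, MeasurableSet[MeasurableSpace.comap f inferInstance] s →
      ∫ x, s.indicator (fun _ => (1:ℝ)) x * e x * a x ∂μ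
        = ∫ x, s.indicator (fun _ => (1:ℝ)) x * g x * a x ∂μ := by
    rintro s ⟨D, hD, rfl⟩
    have hsm : MeasurableSet (f ⁻¹' D) := hf hD
    have hsi : Integrable ((f ⁻¹' D).indicator (fun _ => (1:ℝ))) μ :=
      (integrable_const (1:ℝ)).indicator hsm
    have hprod : (μ⟦f ⁻¹' D ∩ t|m'⟧) =ᵐ[μ]
        fun ω => (μ⟦f ⁻¹' D|m'⟧) ω * (μ⟦t|m'⟧) ω :=
      (condIndepFun_iff_condExp_inter_preimage_eq_mul hf hW).mp hCI D C hD hC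
    have hpull : μ[fun x => k x * (f ⁻¹' D).indicator (fun _ => (1:ℝ)) x|m']
        =ᵐ[μ] fun x => k x * (μ[(f ⁻¹' D).indicator (fun _ => (1:ℝ))|m']) x := by
      have := condExp_stronglyMeasurable_mul_of_bound hm' hk_sm hsi 1 hk_bd
      exact this
    -- LHS is a measure of an intersection
    have hLHS : ∫ x, (f ⁻¹' D).indicator (fun _ => (1:ℝ)) x * e x * a x ∂μ
        = (μ (A ∩ (f ⁻¹' D ∩ t))).toReal := by
      have hfun : (fun x => (f ⁻¹' D).indicator (fun _ => (1:ℝ)) x * e x * a x)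
          = (A ∩ (f ⁻¹' D ∩ t)).indicator (fun _ => (1:ℝ)) := by
        funext x
        by_cases h1 : x ∈ f ⁻¹' D <;> by_cases h2 : x ∈ t <;> by_cases h3 : x ∈ A <;>
          simp [he_def, ha_def, Set.indicator_apply, h1, h2, h3]
      rw [hfun]
      exact integral_indicator_one (hAm.inter (hsm.inter htm))
    rw [hLHS]
    -- RHS chain
    calc (μ (A ∩ (f ⁻¹' D ∩ t))).toReal
        = ∫ x in A, (f ⁻¹' D ∩ t).indicator (fun _ => (1:ℝ)) x ∂μ := by
          rw [setIntegral_indicator (hsm.inter htm), Set.inter_comm A,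
            integral_const]
          simp [Set.inter_comm, Measure.real]
      _ = ∫ x in A, (μ⟦f ⁻¹' D ∩ t|m'⟧) x ∂μ :=
          (setIntegral_condExp hm' ((integrable_const (1:ℝ)).indicator (hsm.inter htm)) hA).symm
      _ = ∫ x, a x * (μ⟦f ⁻¹' D ∩ t|m'⟧) x ∂μ := by
          rw [← integral_indicator hAm]
          congr 1
          funext x
          by_cases hx : x ∈ A <;> simp [ha_def, Set.indicator_apply, hx]
      _ = ∫ x, a x * ((μ⟦f ⁻¹' D|m'⟧) x * g x) ∂μ := by
          refine integral_congr_ae ?_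
          filter_upwards [hprod] with x hx
          rw [hx]
      _ = ∫ x, k x * (μ[(f ⁻¹' D).indicator (fun _ => (1:ℝ))|m']) x ∂μ := by
          congr 1; funext x; simp [hk_def]; ring
      _ = ∫ x, (μ[fun x => k x * (f ⁻¹' D).indicator (fun _ => (1:ℝ)) x|m']) x ∂μ :=
          (integral_congr_ae hpull).symm
      _ = ∫ x, k x * (f ⁻¹' D).indicator (fun _ => (1:ℝ)) x ∂μ := integral_condExp hm'
      _ = ∫ x, (f ⁻¹' D).indicator (fun _ => (1:ℝ)) x * g x * a x ∂μ := by
          congr 1; funext x; simp [hk_def]; ring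
  -- extend to simple functions measurable w.r.t. comap f
  have hQ_simple : ∀ ψ : @SimpleFunc Ω (MeasurableSpace.comap f inferInstance) ℝ,
      ∫ x, ψ x * e x * a x ∂μ = ∫ x, ψ x * g x * a x ∂μ := by
    intro ψ
    refine @SimpleFunc.induction Ω ℝ (MeasurableSpace.comap f inferInstance) _
      (fun ψ => ∫ x, ψ x * e x * a x ∂μ = ∫ x, ψ x * g x * a x ∂μ) ?_ ?_ ψ
    · intro c s hs
      simp only [SimpleFunc.const_zero, SimpleFunc.coe_piecewise, SimpleFunc.coe_const,
        SimpleFunc.coe_zero, Set.piecewise_eq_indicator]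
      have hcoe : ∀ x, s.indicator (Function.const Ω c) x
          = c * s.indicator (fun _ => (1:ℝ)) x := by
        intro x
        by_cases hx : x ∈ s
        · simp [Set.indicator_of_mem hx]
        · simp [Set.indicator_of_notMem hx]
      simp_rw [hcoe, mul_assoc c]
      rw [integral_const_mul, integral_const_mul, hQ_ind s hs]
    · intro ψ₁ ψ₂ _ h₁ h₂
      have hint : ∀ ψ : @SimpleFunc Ω (MeasurableSpace.comap f inferInstance) ℝ,
          (Integrable (fun x => ψ x * e x * a x) μ ∧
           Integrable (fun x => ψ x * g x * a x) μ) := by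
        intro ψ
        obtain ⟨Cb, hCb⟩ := @SimpleFunc.exists_forall_norm_le Ω ℝ (MeasurableSpace.comap f inferInstance) _ ψ
        have hψm : AEStronglyMeasurable ψ μ :=
          ((ψ.stronglyMeasurable).mono hf.comap_le).aestronglyMeasurable
        have hem : AEStronglyMeasurable e μ :=
          ((integrable_const (1:ℝ)).indicator htm).aestronglyMeasurable
        have ham : AEStronglyMeasurable a μ :=
          ((ha_sm.mono hm')).aestronglyMeasurable
        have hgm : AEStronglyMeasurable g μ :=
          ((hg_sm.mono hm')).aestronglyMeasurable
        constructor
        · refine integrable_of_bdd ((hψm.mul hem).mul ham) (C := Cb) ?_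
          refine Eventually.of_forall fun x => ?_
          calc ‖ψ x * e x * a x‖ = ‖ψ x‖ * ‖e x‖ * ‖a x‖ := by
                rw [norm_mul, norm_mul]
            _ ≤ Cb * 1 * 1 :=
                mul_le_mul (mul_le_mul (hCb x) (he_bd x) (norm_nonneg _)
                  ((norm_nonneg _).trans (hCb x))) (ha_bd x) (norm_nonneg _)
                  (mul_nonneg ((norm_nonneg _).trans (hCb x)) zero_le_one)
            _ = Cb := by ring
        · refine integrable_of_bdd ((hψm.mul hgm).mul ham) (C := Cb) ?_
          filter_upwards [hg_bd] with x hgx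
          calc ‖ψ x * g x * a x‖ = ‖ψ x‖ * ‖g x‖ * ‖a x‖ := by
                rw [norm_mul, norm_mul]
            _ ≤ Cb * 1 * 1 :=
                mul_le_mul (mul_le_mul (hCb x) hgx (norm_nonneg _)
                  ((norm_nonneg _).trans (hCb x))) (ha_bd x) (norm_nonneg _)
                  (mul_nonneg ((norm_nonneg _).trans (hCb x)) zero_le_one)
            _ = Cb := by ring
      have hadd : ∀ x, ((ψ₁ + ψ₂ : @SimpleFunc Ω (MeasurableSpace.comap f inferInstance) ℝ)) x
          = ψ₁ x + ψ₂ x := fun x => rfl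
      simp_rw [hadd, add_mul]
      rw [integral_add (hint ψ₁).1 (hint ψ₂).1, integral_add (hint ψ₁).2 (hint ψ₂).2, h₁, h₂]
  -- pass to the limit: Q f
  have hf_mf : @Measurable Ω ℝ (MeasurableSpace.comap f inferInstance) _ f :=
    Measurable.of_comap_le le_rfl
  set sn : ℕ → @SimpleFunc Ω (MeasurableSpace.comap f inferInstance) ℝ := fun n =>
    @SimpleFunc.approxOn ℝ Ω _ _ _ (MeasurableSpace.comap f inferInstance) f hf_mf
      Set.univ 0 (Set.mem_univ 0) _ n with hsn_def
  have htend : ∀ x, Tendsto (fun n => sn n x) atTop (𝓝 (f x)) := fun x =>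
    @SimpleFunc.tendsto_approxOn ℝ Ω _ _ _ (MeasurableSpace.comap f inferInstance) f hf_mf
      Set.univ 0 (Set.mem_univ 0) _ x (by simp)
  have hbnd : ∀ n x, ‖sn n x‖ ≤ ‖f x‖ + ‖f x‖ := fun n x =>
    @SimpleFunc.norm_approxOn_zero_le Ω ℝ (MeasurableSpace.comap f inferInstance) _ _ _ f hf_mf
      Set.univ (Set.mem_univ 0) _ x n
  have hBint : Integrable (fun x => ‖f x‖ + ‖f x‖) μ := hfi.norm.add hfi.norm
  have hem : AEStronglyMeasurable e μ :=
    ((integrable_const (1:ℝ)).indicator htm).aestronglyMeasurable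
  have ham : AEStronglyMeasurable a μ := (ha_sm.mono hm').aestronglyMeasurable
  have hgm : AEStronglyMeasurable g μ := (hg_sm.mono hm').aestronglyMeasurable
  have hQf : ∫ x, f x * e x * a x ∂μ = ∫ x, f x * g x * a x ∂μ := by
    have hL : Tendsto (fun n => ∫ x, sn n x * e x * a x ∂μ) atTop
        (𝓝 (∫ x, f x * e x * a x ∂μ)) := by
      refine tendsto_integral_of_dominated_convergence (fun x => ‖f x‖ + ‖f x‖)
        (fun n => ?_) hBint (fun n => ?_) ?_
      · exact ((((sn n).stronglyMeasurable.mono hf.comap_le).aestronglyMeasurable.mul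
          hem).mul ham)
      · refine Eventually.of_forall fun x => ?_
        calc ‖sn n x * e x * a x‖ = ‖sn n x‖ * ‖e x‖ * ‖a x‖ := by rw [norm_mul, norm_mul]
          _ ≤ (‖f x‖ + ‖f x‖) * 1 * 1 :=
              mul_le_mul (mul_le_mul (hbnd n x) (he_bd x) (norm_nonneg _)
                ((norm_nonneg _).trans (hbnd n x))) (ha_bd x) (norm_nonneg _) (by positivity)
          _ = ‖f x‖ + ‖f x‖ := by ring
      · refine Eventually.of_forall fun x => ?_
        exact ((htend x).mul_const (e x)).mul_const (a x)
    have hR : Tendsto (fun n => ∫ x, sn n x * g x * a x ∂μ) atTop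
        (𝓝 (∫ x, f x * g x * a x ∂μ)) := by
      refine tendsto_integral_of_dominated_convergence (fun x => ‖f x‖ + ‖f x‖)
        (fun n => ?_) hBint (fun n => ?_) ?_
      · exact ((((sn n).stronglyMeasurable.mono hf.comap_le).aestronglyMeasurable.mul
          hgm).mul ham)
      · filter_upwards [hg_bd] with x hgx
        calc ‖sn n x * g x * a x‖ = ‖sn n x‖ * ‖g x‖ * ‖a x‖ := by rw [norm_mul, norm_mul]
          _ ≤ (‖f x‖ + ‖f x‖) * 1 * 1 :=
              mul_le_mul (mul_le_mul (hbnd n x) hgx (norm_nonneg _)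
                ((norm_nonneg _).trans (hbnd n x))) (ha_bd x) (norm_nonneg _) (by positivity)
          _ = ‖f x‖ + ‖f x‖ := by ring
      · refine Eventually.of_forall fun x => ?_
        exact ((htend x).mul_const (g x)).mul_const (a x)
    have heq : (fun n => ∫ x, sn n x * e x * a x ∂μ)
        = fun n => ∫ x, sn n x * g x * a x ∂μ := funext fun n => hQ_simple (sn n)
    rw [heq] at hL
    exact tendsto_nhds_unique hL hR
  -- conclude
  have hind : ∀ φ : Ω → ℝ, ∫ x in A ∩ t, φ x ∂μ = ∫ x, φ x * e x * a x ∂μ := by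
    intro φ
    rw [← integral_indicator (hAm.inter htm)]
    congr 1
    funext x
    by_cases h2 : x ∈ t <;> by_cases h3 : x ∈ A <;>
      simp [he_def, ha_def, Set.indicator_apply, h2, h3]
  rw [hind f, hind (μ[f|m']), hQf]
  -- remains: ∫ μ[f|m'] * e * a = ∫ f * g * a
  set h : Ω → ℝ := fun x => a x * (μ[f|m']) x with hh_def
  have hh_sm : StronglyMeasurable[m'] h := ha_sm.mul stronglyMeasurable_condExp
  have hh_int : Integrable h μ := by
    refine Integrable.bdd_mul (c := 1) integrable_condExp ham ?_
    exact Eventually.of_forall ha_bd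
  have hhe_int : Integrable (fun x => h x * e x) μ := by
    have : (fun x => h x * e x) = fun x => e x * h x := funext fun x => mul_comm _ _
    rw [this]
    exact Integrable.bdd_mul (c := 1) hh_int hem (Eventually.of_forall he_bd)
  have hpull1 : μ[fun x => h x * e x|m'] =ᵐ[μ] fun x => h x * g x := by
    have := condExp_mul_of_stronglyMeasurable_left hh_sm hhe_int hei
    exact this
  have hpull2 : μ[fun x => k x * f x|m'] =ᵐ[μ] fun x => k x * (μ[f|m']) x := by
    have := condExp_stronglyMeasurable_mul_of_bound hm' hk_sm hfi 1 hk_bd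
    exact this
  calc ∫ x, (μ[f|m']) x * e x * a x ∂μ
      = ∫ x, h x * e x ∂μ := by congr 1; funext x; simp [hh_def]; ring
    _ = ∫ x, (μ[fun x => h x * e x|m']) x ∂μ := (integral_condExp hm').symm
    _ = ∫ x, h x * g x ∂μ := integral_congr_ae hpull1
    _ = ∫ x, k x * (μ[f|m']) x ∂μ := by congr 1; funext x; simp [hh_def, hk_def]; ring
    _ = ∫ x, (μ[fun x => k x * f x|m']) x ∂μ := (integral_congr_ae hpull2).symm
    _ = ∫ x, k x * f x ∂μ := integral_condExp hm'
    _ = ∫ x, f x * g x * a x ∂μ := by congr 1; funext x; simp [hk_def]; ring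

/-- If `f` and `W` are conditionally independent given `m'`, then
`μ[f | m' ⊔ σ(W)] = μ[f | m']` a.s. -/
lemma condexp_join_of_condIndepFun
    (hm' : m' ≤ mΩ)
    {f W : Ω → ℝ} (hf : Measurable f) (hW : Measurable W)
    (hCI : CondIndepFun m' hm' f W μ) (hfi : Integrable f μ) :
    μ[f | m' ⊔ MeasurableSpace.comap W inferInstance] =ᵐ[μ] μ[f | m'] := by
  have hm₂ : m' ⊔ MeasurableSpace.comap W inferInstance ≤ mΩ := sup_le hm' hW.comap_le
  refine (ae_eq_condExp_of_forall_setIntegral_eq hm₂ hfi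
    (fun s _ _ => integrable_condExp.integrableOn) ?_
    ((stronglyMeasurable_condExp.mono le_sup_left : StronglyMeasurable[m' ⊔ MeasurableSpace.comap W inferInstance] (μ[f|m'])).aestronglyMeasurable)).symm
  intro s hs _
  -- π-system induction
  set S : Set (Set Ω) := {u | ∃ A t : Set Ω, MeasurableSet[m'] A ∧ MeasurableSet[(MeasurableSpace.comap W inferInstance : MeasurableSpace Ω)] t ∧
    u = A ∩ t} with hS_def
  have h_eq : (m' ⊔ (MeasurableSpace.comap W inferInstance : MeasurableSpace Ω)) = MeasurableSpace.generateFrom S := by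
    refine le_antisymm (sup_le ?_ ?_) (MeasurableSpace.generateFrom_le ?_)
    · intro u hu
      exact MeasurableSpace.measurableSet_generateFrom
        ⟨u, Set.univ, hu, @MeasurableSet.univ Ω (MeasurableSpace.comap W inferInstance : MeasurableSpace Ω), (Set.inter_univ u).symm⟩
    · intro u hu
      exact MeasurableSpace.measurableSet_generateFrom
        ⟨Set.univ, u, @MeasurableSet.univ Ω m', hu, (Set.univ_inter u).symm⟩
    · rintro u ⟨A, t, hA, ht, rfl⟩
      exact MeasurableSet.inter ((le_sup_left : m' ≤ m' ⊔ (MeasurableSpace.comap W inferInstance : MeasurableSpace Ω)) _ hA)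
        ((le_sup_right : (MeasurableSpace.comap W inferInstance : MeasurableSpace Ω) ≤ m' ⊔ (MeasurableSpace.comap W inferInstance : MeasurableSpace Ω)) _ ht)
  have h_pi : IsPiSystem S := by
    rintro u ⟨A₁, t₁, hA₁, ht₁, rfl⟩ v ⟨A₂, t₂, hA₂, ht₂, rfl⟩ _
    exact ⟨A₁ ∩ A₂, t₁ ∩ t₂, hA₁.inter hA₂, ht₁.inter ht₂, by
      rw [Set.inter_inter_inter_comm]⟩
  have main : ∀ ⦃u : Set Ω⦄, MeasurableSet[m' ⊔ (MeasurableSpace.comap W inferInstance : MeasurableSpace Ω)] u →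
      ∫ x in u, (μ[f|m']) x ∂μ = ∫ x in u, f x ∂μ := by
    refine @MeasurableSpace.induction_on_inter Ω (m' ⊔ (MeasurableSpace.comap W inferInstance : MeasurableSpace Ω))
      (fun u _ => ∫ x in u, (μ[f|m']) x ∂μ = ∫ x in u, f x ∂μ) S
      h_eq h_pi ?_ ?_ ?_ ?_
    · simp
    · rintro u ⟨A, t, hA, ht, rfl⟩
      obtain ⟨C, hC, rfl⟩ := ht
      exact crux hm' hf hW hCI hfi hA hC
    · intro u hu hu_eq
      have h1 := integral_add_compl (hm₂ _ hu) (integrable_condExp : Integrable (μ[f|m']) μ)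
      have h2 := integral_add_compl (hm₂ _ hu) hfi
      have h3 : ∫ x, (μ[f|m']) x ∂μ = ∫ x, f x ∂μ := integral_condExp hm'
      linarith
    · intro s hdisj hmeas heq
      rw [integral_iUnion (fun i => hm₂ _ (hmeas i)) hdisj
        integrable_condExp.integrableOn,
        integral_iUnion (fun i => hm₂ _ (hmeas i)) hdisj hfi.integrableOn]
      exact tsum_congr heq
  exact main hs

end Aux

/-- Under conditional independence of `B` and `W` given `σ(X)`, the regression function of
`Y = B₀ + B₁·W` satisfies `E[Y | σ(X) ⊔ σ(W)] = E[B₀ | σ(X)] + E[B₁ | σ(X)] · W` a.s. -/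
theorem stmt_13
    {Ω : Type*} [MeasurableSpace Ω] [StandardBorelSpace Ω] [Nonempty Ω]
    {P : Measure Ω} [IsProbabilityMeasure P] {d : ℕ}
    {B : Ω → ℝ × ℝ} {W : Ω → ℝ} {X : Ω → (Fin d → ℝ)}
    (hB : Measurable B) (hW : Measurable W) (hX : Measurable X)
    (hCI : CondIndepFun (MeasurableSpace.comap X inferInstance) hX.comap_le B W P)
    (Y : Ω → ℝ) (hY : ∀ ω, Y ω = (B ω).1 + (B ω).2 * W ω)
    (hB0 : Integrable (fun ω => (B ω).1) P)
    (hB1 : Integrable (fun ω => (B ω).2) P)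
    (hB1W : Integrable (fun ω => (B ω).2 * W ω) P) :
    P[Y | MeasurableSpace.comap X inferInstance ⊔ MeasurableSpace.comap W inferInstance]
      =ᵐ[P]
    fun ω => (P[fun ω' => (B ω').1 | MeasurableSpace.comap X inferInstance]) ω
      + (P[fun ω' => (B ω').2 | MeasurableSpace.comap X inferInstance]) ω * W ω := by
  have hm' : MeasurableSpace.comap X inferInstance ≤ ‹MeasurableSpace Ω› := hX.comap_le
  have hCI0 : CondIndepFun (MeasurableSpace.comap X inferInstance) hX.comap_le
      (fun ω => (B ω).1) W P := hCI.comp measurable_fst measurable_id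
  have hCI1 : CondIndepFun (MeasurableSpace.comap X inferInstance) hX.comap_le
      (fun ω => (B ω).2) W P := hCI.comp measurable_snd measurable_id
  have hB0m : Measurable (fun ω => (B ω).1) := measurable_fst.comp hB
  have hB1m : Measurable (fun ω => (B ω).2) := measurable_snd.comp hB
  have hYeq : Y = (fun ω => (B ω).1) + fun ω => (B ω).2 * W ω := funext hY
  have hadd : P[Y|MeasurableSpace.comap X inferInstance ⊔ MeasurableSpace.comap W inferInstance]
      =ᵐ[P] P[fun ω => (B ω).1|MeasurableSpace.comap X inferInstance ⊔
          MeasurableSpace.comap W inferInstance]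
        + P[fun ω => (B ω).2 * W ω|MeasurableSpace.comap X inferInstance ⊔
          MeasurableSpace.comap W inferInstance] := by
    rw [hYeq]
    exact condExp_add hB0 hB1W _
  have hWm₂ : StronglyMeasurable[MeasurableSpace.comap X inferInstance ⊔
      MeasurableSpace.comap W inferInstance] W := by
    have : Measurable[MeasurableSpace.comap X inferInstance ⊔
        MeasurableSpace.comap W inferInstance] W := by
      rw [measurable_iff_comap_le]
      exact le_sup_right
    exact this.stronglyMeasurable
  have hmul : P[fun ω => (B ω).2 * W ω|MeasurableSpace.comap X inferInstance ⊔
      MeasurableSpace.comap W inferInstance] =ᵐ[P]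
      fun ω => W ω * (P[fun ω => (B ω).2|MeasurableSpace.comap X inferInstance ⊔
        MeasurableSpace.comap W inferInstance]) ω := by
    have hWB1 : Integrable (W * fun ω => (B ω).2) P := by
      have he : (W * fun ω => (B ω).2) = fun ω => (B ω).2 * W ω :=
        funext fun ω => mul_comm _ _
      rw [he]; exact hB1W
    have h1 := condExp_mul_of_stronglyMeasurable_left hWm₂ hWB1 hB1
    have h2 : (fun ω => (B ω).2 * W ω) = fun ω => W ω * (B ω).2 :=
      funext fun ω => mul_comm _ _
    rw [h2]
    exact h1
  have hj0 : P[fun ω => (B ω).1|MeasurableSpace.comap X inferInstance ⊔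
      MeasurableSpace.comap W inferInstance]
      =ᵐ[P] P[fun ω => (B ω).1|MeasurableSpace.comap X inferInstance] :=
    condexp_join_of_condIndepFun hm' hB0m hW hCI0 hB0
  have hj1 : P[fun ω => (B ω).2|MeasurableSpace.comap X inferInstance ⊔
      MeasurableSpace.comap W inferInstance]
      =ᵐ[P] P[fun ω => (B ω).2|MeasurableSpace.comap X inferInstance] :=
    condexp_join_of_condIndepFun hm' hB1m hW hCI1 hB1
  filter_upwards [hadd, hmul, hj0, hj1] with ω h1 h2 h3 h4
  simp only [Pi.add_apply] at h1
  rw [h1, h2, h3, h4, mul_comm]
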